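/- Suppose m = n, and write the interaction decompositions as u = u_∅ + ∑_{i=1}^n u_{{i}} + ũ and v = v_∅ + ∑_{i=1}^n v_{{i}} + ṽ, where ũ := ∑_{|I| ≥ 2} u_I and ṽ := ∑_{|J| ≥ 2} v_J collect all components of order at least two. The following are equivalent: (i) there exist functions h : X → ℝ and f_i : X_i × Y_i → ℝ (i = 1,…,n) such that P(y|x) = h(x) · ∏_{i=1}^n f_i(x_i, y_i) for all x ∈ X, y ∈ Y; (ii) ⟨u(x), ṽ(y)⟩ = 0 and ⟨ũ(x), v(y) − v_∅⟩ = 0 for all x ∈ X, y ∈ Y, and ⟨u_{{i}}(x), v_{{j}}(y)⟩ = 0 for all x ∈ X, y ∈ Y whenever i ≠ j. -/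

import Mathlib

open Finset
open scoped RealInnerProductSpace

/-- Averaging operator π_J. -/
noncomputable def piAvg {ι : Type*} [Fintype ι] [DecidableEq ι] {Z : ι → Type*}
    [∀ i, Fintype (Z i)] [∀ i, DecidableEq (Z i)] {V : Type*} [AddCommGroup V] [Module ℝ V]
    (J : Finset ι) (w : (∀ i, Z i) → V) : (∀ i, Z i) → V :=
  fun z => (∏ i ∈ Jᶜ, (Fintype.card (Z i) : ℝ))⁻¹ •
    ∑ z' ∈ Finset.univ.filter (fun z' : ∀ i, Z i => ∀ i ∈ J, z' i = z i), w z'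

/-- Interaction projection Q_I. -/
noncomputable def Qop {ι : Type*} [Fintype ι] [DecidableEq ι] {Z : ι → Type*}
    [∀ i, Fintype (Z i)] [∀ i, DecidableEq (Z i)] {V : Type*} [AddCommGroup V] [Module ℝ V]
    (I : Finset ι) (w : (∀ i, Z i) → V) : (∀ i, Z i) → V :=
  ∑ J ∈ I.powerset, ((-1 : ℝ) ^ (I \ J).card) • piAvg J w

section Helpers

variable {ι : Type*} [Fintype ι] [DecidableEq ι] {Z : ι → Type*}
  [∀ i, Fintype (Z i)] [∀ i, Nonempty (Z i)] [∀ i, DecidableEq (Z i)]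
  {V : Type*} [AddCommGroup V] [Module ℝ V]

/-- The aSlice finset. -/
noncomputable def aSlice (J : Finset ι) (z : ∀ i, Z i) : Finset (∀ i, Z i) :=
  Finset.univ.filter (fun z' : ∀ i, Z i => ∀ i ∈ J, z' i = z i)

lemma piAvg_apply (J : Finset ι) (w : (∀ i, Z i) → V) (z : ∀ i, Z i) :
    piAvg J w z = (∏ i ∈ Jᶜ, (Fintype.card (Z i) : ℝ))⁻¹ • ∑ z' ∈ aSlice J z, w z' := rfl

lemma Qop_apply (I : Finset ι) (w : (∀ i, Z i) → V) (z : ∀ i, Z i) :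
    Qop I w z = ∑ J ∈ I.powerset, ((-1 : ℝ) ^ (I \ J).card) • piAvg J w z := by
  simp [Qop]

lemma slice_eq_piFinset (J : Finset ι) (z : ∀ i, Z i) :
    aSlice J z = Fintype.piFinset (fun k => if k ∈ J then ({z k} : Finset (Z k)) else Finset.univ) := by
  ext z'
  simp only [aSlice, mem_filter, mem_univ, true_and, Fintype.mem_piFinset]
  constructor
  · intro h k
    by_cases hk : k ∈ J
    · simp [hk, h k hk]
    · simp [hk]
  · intro h k hk
    have := h k
    simpa [hk] using this

lemma card_slice (J : Finset ι) (z : ∀ i, Z i) :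
    (aSlice J z).card = ∏ i ∈ Jᶜ, Fintype.card (Z i) := by
  rw [slice_eq_piFinset, Fintype.card_piFinset]
  rw [← Finset.prod_mul_prod_compl J]
  have h1 : ∏ i ∈ J, (if i ∈ J then ({z i} : Finset (Z i)) else Finset.univ).card = 1 :=
    Finset.prod_eq_one fun i hi => by simp [hi]
  have h2 : ∏ i ∈ Jᶜ, (if i ∈ J then ({z i} : Finset (Z i)) else Finset.univ).card
      = ∏ i ∈ Jᶜ, Fintype.card (Z i) :=
    Finset.prod_congr rfl fun i hi => by simp [Finset.mem_compl.mp hi, Finset.card_univ]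
  rw [h1, h2, one_mul]

lemma prod_card_ne_zero (J : Finset ι) : (∏ i ∈ Jᶜ, (Fintype.card (Z i) : ℝ)) ≠ 0 :=
  Finset.prod_ne_zero_iff.mpr fun i _ => Nat.cast_ne_zero.mpr (Fintype.card_pos).ne'

lemma piAvg_const (J : Finset ι) (c : V) (z : ∀ i, Z i) :
    piAvg J (fun _ => c) z = c := by
  rw [piAvg_apply, Finset.sum_const, card_slice, ← Nat.cast_smul_eq_nsmul ℝ, smul_smul,
    Nat.cast_prod, inv_mul_cancel₀ (prod_card_ne_zero J), one_smul]

lemma piAvg_eval_mem {J : Finset ι} {i : ι} (g : Z i → V) (hi : i ∈ J) (z : ∀ i, Z i) :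
    piAvg J (fun z => g (z i)) z = g (z i) := by
  rw [piAvg_apply]
  have : ∑ z' ∈ aSlice J z, g (z' i) = ∑ _z' ∈ aSlice J z, g (z i) :=
    Finset.sum_congr rfl fun z' hz' => by
      rw [(Finset.mem_filter.mp hz').2 i hi]
  rw [this, Finset.sum_const, card_slice, ← Nat.cast_smul_eq_nsmul ℝ, smul_smul,
    Nat.cast_prod, inv_mul_cancel₀ (prod_card_ne_zero J), one_smul]

lemma piAvg_eval_not_mem {J : Finset ι} {i : ι} (g : Z i → ℝ) (hi : i ∉ J) (z : ∀ i, Z i) :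
    piAvg J (fun z => g (z i)) z = (Fintype.card (Z i) : ℝ)⁻¹ * ∑ a, g a := by
  have hfib : ∀ a : Z i, (aSlice J z).filter (fun z' => z' i = a)
      = aSlice (insert i J) (Function.update z i a) := by
    intro a
    ext z'
    simp only [aSlice, Finset.filter_filter, mem_filter, mem_univ, true_and, mem_insert]
    constructor
    · rintro ⟨h1, h2⟩ k hk
      rcases hk with rfl | hk
      · simpa using h2
      · have hki : k ≠ i := fun h => hi (h ▸ hk)
        rw [Function.update_of_ne hki]
        exact h1 k hk
    · intro h
      refine ⟨fun k hk => ?_, ?_⟩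
      · have hki : k ≠ i := fun h => hi (h ▸ hk)
        have := h k (Or.inr hk)
        rwa [Function.update_of_ne hki] at this
      · simpa using h i (Or.inl rfl)
  have hsum : ∑ z' ∈ aSlice J z, g (z' i)
      = ∑ a : Z i, (∏ k ∈ (insert i J)ᶜ, Fintype.card (Z k) : ℕ) * g a := by
    rw [← Finset.sum_fiberwise_of_maps_to (g := fun z' : ∀ k, Z k => z' i)
      (fun z' _ => Finset.mem_univ (z' i)) (fun z' => g (z' i))]
    refine Finset.sum_congr rfl fun a _ => ?_
    have : ∑ z' ∈ (aSlice J z).filter (fun z' => z' i = a), g (z' i)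
        = ∑ _z' ∈ (aSlice J z).filter (fun z' => z' i = a), g a :=
      Finset.sum_congr rfl fun z' hz' => by rw [(Finset.mem_filter.mp hz').2]
    rw [this, Finset.sum_const, hfib, card_slice, nsmul_eq_mul]
  have hcomp : Jᶜ = insert i (insert i J)ᶜ := by
    ext k
    simp only [Finset.mem_compl, Finset.mem_insert]
    by_cases hk : k = i
    · subst hk; simp [hi]
    · simp [hk]
  have hnotmem : i ∉ (insert i J)ᶜ := by simp
  rw [piAvg_apply, hsum, ← Finset.mul_sum, smul_eq_mul, ← mul_assoc, hcomp,
    Finset.prod_insert hnotmem]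
  have hc : (∏ k ∈ (insert i J)ᶜ, (Fintype.card (Z k) : ℝ)) ≠ 0 :=
    Finset.prod_ne_zero_iff.mpr fun k _ => Nat.cast_ne_zero.mpr (Fintype.card_pos).ne'
  have hci : (Fintype.card (Z i) : ℝ) ≠ 0 := Nat.cast_ne_zero.mpr (Fintype.card_pos).ne'
  push_cast
  field_simp


lemma alt_sum_zero (s : Finset ι) (hs : s.Nonempty) :
    ∑ K ∈ s.powerset, (-1 : ℝ) ^ K.card = 0 := by
  have := Finset.sum_powerset_neg_one_pow_card_of_nonempty hs
  exact_mod_cast congrArg (Int.cast : ℤ → ℝ) this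

lemma alt_sum_sdiff_zero (s : Finset ι) (hs : s.Nonempty) :
    ∑ K ∈ s.powerset, (-1 : ℝ) ^ (s \ K).card = 0 := by
  rw [← alt_sum_zero s hs]
  refine Finset.sum_nbij' (fun K => s \ K) (fun K => s \ K) ?_ ?_ ?_ ?_ ?_
  · intro K hK; exact Finset.mem_powerset.mpr (Finset.sdiff_subset)
  · intro K hK; exact Finset.mem_powerset.mpr (Finset.sdiff_subset)
  · intro K hK; exact Finset.sdiff_sdiff_eq_self (Finset.mem_powerset.mp hK)
  · intro K hK; exact Finset.sdiff_sdiff_eq_self (Finset.mem_powerset.mp hK)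
  · intro K hK; rfl

lemma Qop_const (I : Finset ι) (c : V) (z : ∀ i, Z i) (hI : I.Nonempty) :
    Qop I (fun _ => c) z = 0 := by
  rw [Qop_apply]
  have : ∀ J ∈ I.powerset, ((-1 : ℝ) ^ (I \ J).card) • piAvg J (fun _ => c) z
      = ((-1 : ℝ) ^ (I \ J).card) • c := fun J _ => by rw [piAvg_const]
  rw [Finset.sum_congr rfl this, ← Finset.sum_smul, alt_sum_sdiff_zero I hI, zero_smul]

lemma Qop_eval {I : Finset ι} {i : ι} (g : Z i → ℝ) (h1 : I.Nonempty) (h2 : I ≠ {i})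
    (z : ∀ i, Z i) : Qop I (fun z => g (z i)) z = 0 := by
  by_cases hi : i ∈ I
  · -- pair up subsets containing i with those not containing i
    set s := I.erase i with hs
    have hins : I = insert i s := (Finset.insert_erase hi).symm
    have hnis : i ∉ s := Finset.notMem_erase i I
    have hsne : s.Nonempty := by
      rcases Finset.eq_empty_or_nonempty s with h | h
      · exact absurd (by rw [hins, h]; simp) h2
      · exact h
    rw [Qop_apply, hins, Finset.sum_powerset_insert hnis]
    have hterm : ∀ K ∈ s.powerset,
        ((-1:ℝ) ^ ((insert i s) \ K).card) • piAvg K (fun z => g (z i)) z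
          + ((-1:ℝ) ^ ((insert i s) \ (insert i K)).card) • piAvg (insert i K) (fun z => g (z i)) z
        = ((-1:ℝ) ^ ((s \ K).card)) •
            (g (z i) - (Fintype.card (Z i) : ℝ)⁻¹ * ∑ a, g a) := by
      intro K hK
      have hKs : K ⊆ s := Finset.mem_powerset.mp hK
      have hiK : i ∉ K := fun h => hnis (hKs h)
      have e1 : (insert i s) \ K = insert i (s \ K) := by
        rw [Finset.insert_sdiff_of_notMem _ hiK]
      have e2 : (insert i s) \ (insert i K) = s \ K := by
        ext k
        simp only [Finset.mem_sdiff, Finset.mem_insert]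
        constructor
        · rintro ⟨rfl | hk, hk2⟩
          · exact absurd (Or.inl rfl) hk2
          · exact ⟨hk, fun h => hk2 (Or.inr h)⟩
        · rintro ⟨hk, hk2⟩
          exact ⟨Or.inr hk, fun h => by
            rcases h with rfl | h
            · exact hnis hk
            · exact hk2 h⟩
      have e3 : i ∉ s \ K := fun h => hnis (Finset.mem_sdiff.mp h).1
      rw [e1, e2, Finset.card_insert_of_notMem e3,
        piAvg_eval_not_mem g (fun h => hiK h) z,
        piAvg_eval_mem g (Finset.mem_insert_self i K) z, pow_succ, smul_sub]
      simp only [smul_eq_mul]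
      ring
    rw [← Finset.sum_add_distrib, Finset.sum_congr rfl hterm, ← Finset.sum_smul,
      alt_sum_sdiff_zero s hsne, zero_smul]
  · -- i not in I : all piAvg are the same constant
    rw [Qop_apply]
    have : ∀ J ∈ I.powerset, ((-1 : ℝ) ^ (I \ J).card) • piAvg J (fun z => g (z i)) z
        = ((-1 : ℝ) ^ (I \ J).card) • ((Fintype.card (Z i) : ℝ)⁻¹ * ∑ a, g a) := by
      intro J hJ
      have : i ∉ J := fun h => hi (Finset.mem_powerset.mp hJ h)
      rw [piAvg_eval_not_mem g this z]
    rw [Finset.sum_congr rfl this, ← Finset.sum_smul, alt_sum_sdiff_zero I h1, zero_smul]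

lemma piAvg_congr_agree {J : Finset ι} {z z' : ∀ i, Z i} (w : (∀ i, Z i) → V)
    (h : ∀ i ∈ J, z i = z' i) : piAvg J w z = piAvg J w z' := by
  have hset : aSlice J z = aSlice J z' := by
    ext z''
    simp only [aSlice, mem_filter, mem_univ, true_and]
    exact forall₂_congr fun i hi => by rw [h i hi]
  rw [piAvg_apply, piAvg_apply, hset]

lemma Qop_congr_agree {I : Finset ι} {z z' : ∀ i, Z i} (w : (∀ i, Z i) → V)
    (h : ∀ i ∈ I, z i = z' i) : Qop I w z = Qop I w z' := by
  rw [Qop_apply, Qop_apply]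
  exact Finset.sum_congr rfl fun J hJ => by
    rw [piAvg_congr_agree w (fun i hi => h i (Finset.mem_powerset.mp hJ hi))]

lemma Qop_empty (w : (∀ i, Z i) → V) (z : ∀ i, Z i) :
    Qop (∅ : Finset ι) w z = (∏ i, (Fintype.card (Z i) : ℝ))⁻¹ • ∑ z', w z' := by
  rw [Qop_apply, Finset.powerset_empty, Finset.sum_singleton, piAvg_apply]
  have h1 : aSlice (∅ : Finset ι) z = Finset.univ := by
    ext z''; simp [aSlice]
  rw [h1]
  simp

lemma piAvg_univ (w : (∀ i, Z i) → V) (z : ∀ i, Z i) :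
    piAvg (Finset.univ : Finset ι) w z = w z := by
  rw [piAvg_apply]
  have h1 : aSlice (Finset.univ : Finset ι) z = {z} := by
    ext z''
    simp only [aSlice, mem_filter, mem_univ, true_and, Finset.mem_singleton]
    constructor
    · intro h; exact funext fun i => h i trivial
    · rintro rfl; exact fun i _ => rfl
  rw [h1, Finset.sum_singleton]
  simp

lemma Qop_total (w : (∀ i, Z i) → V) (z : ∀ i, Z i) :
    ∑ I : Finset ι, Qop I w z = w z := by
  have swap : ∑ I : Finset ι, Qop I w z
      = ∑ J : Finset ι, ∑ I ∈ Finset.univ.filter (fun I => J ⊆ I),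
          ((-1 : ℝ) ^ (I \ J).card) • piAvg J w z := by
    simp only [Qop_apply]
    exact Finset.sum_comm' (by intro I J; simp [Finset.mem_powerset])
  rw [swap]
  have inner : ∀ J : Finset ι, ∑ I ∈ Finset.univ.filter (fun I => J ⊆ I),
      ((-1 : ℝ) ^ (I \ J).card) = if J = Finset.univ then 1 else 0 := by
    intro J
    have hbij : ∑ I ∈ Finset.univ.filter (fun I => J ⊆ I), ((-1 : ℝ) ^ (I \ J).card)
        = ∑ K ∈ Jᶜ.powerset, (-1 : ℝ) ^ K.card := by
      refine Finset.sum_nbij' (fun I => I \ J) (fun K => J ∪ K) ?_ ?_ ?_ ?_ ?_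
      · intro I hI
        rw [Finset.mem_powerset]
        intro k hk
        rw [Finset.mem_compl]
        exact (Finset.mem_sdiff.mp hk).2
      · intro K hK
        simp only [Finset.mem_filter, Finset.mem_univ, true_and]
        exact Finset.subset_union_left
      · intro I hI
        simp only [Finset.mem_filter, Finset.mem_univ, true_and] at hI
        show J ∪ I \ J = I
        exact Finset.union_sdiff_of_subset hI
      · intro K hK
        show (J ∪ K) \ J = K
        rw [Finset.union_sdiff_cancel_left]
        rw [Finset.disjoint_left]
        intro k hkJ hkK
        exact (Finset.mem_compl.mp (Finset.mem_powerset.mp hK hkK)) hkJ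
      · intro I hI; rfl
    rw [hbij]
    by_cases hJ : J = Finset.univ
    · subst hJ
      rw [Finset.compl_univ, Finset.powerset_empty, Finset.sum_singleton]
      simp
    · rw [if_neg hJ]
      apply alt_sum_zero
      rw [Finset.nonempty_iff_ne_empty]
      intro h
      exact hJ (by simpa [Finset.compl_eq_empty_iff] using h)
  calc ∑ J : Finset ι, ∑ I ∈ Finset.univ.filter (fun I => J ⊆ I),
          ((-1 : ℝ) ^ (I \ J).card) • piAvg J w z
      = ∑ J : Finset ι, (if J = Finset.univ then (1:ℝ) else 0) • piAvg J w z := by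
        refine Finset.sum_congr rfl fun J _ => ?_
        rw [← Finset.sum_smul, inner J]
    _ = piAvg Finset.univ w z := by
        rw [Finset.sum_eq_single Finset.univ]
        · simp
        · intro J _ hJ; rw [if_neg hJ, zero_smul]
        · intro h; exact absurd (Finset.mem_univ _) h
    _ = w z := piAvg_univ w z

lemma Qop_zero (I : Finset ι) (z : ∀ i, Z i) :
    Qop I (fun _ => (0 : V)) z = 0 := by
  simp [Qop_apply, piAvg_apply]

lemma Qop_add (I : Finset ι) (w₁ w₂ : (∀ i, Z i) → V) (z : ∀ i, Z i) :
    Qop I (fun z => w₁ z + w₂ z) z = Qop I w₁ z + Qop I w₂ z := by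
  simp [Qop_apply, piAvg_apply, Finset.sum_add_distrib, smul_add]

lemma Qop_sum {κ : Type*} (I : Finset ι) (s : Finset κ) (w : κ → (∀ i, Z i) → V)
    (z : ∀ i, Z i) :
    Qop I (fun z => ∑ k ∈ s, w k z) z = ∑ k ∈ s, Qop I (w k) z := by
  classical
  induction s using Finset.induction_on with
  | empty => simpa using Qop_zero I z
  | insert _ _ hk ih =>
    rename_i a s
    rw [Finset.sum_insert hk]
    have : (fun z => ∑ k ∈ insert a s, w k z) = fun z => w a z + ∑ k ∈ s, w k z := by
      funext z'; rw [Finset.sum_insert hk]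
    rw [this, Qop_add, ih]

end Helpers

section InnerHelpers

variable {ι : Type*} [Fintype ι] [DecidableEq ι] {Z : ι → Type*}
  [∀ i, Fintype (Z i)] [∀ i, Nonempty (Z i)] [∀ i, DecidableEq (Z i)]
  {V : Type*} [NormedAddCommGroup V] [InnerProductSpace ℝ V]

lemma inner_Qop_right (I : Finset ι) (w : (∀ i, Z i) → V) (z : ∀ i, Z i) (c : V) :
    ⟪c, Qop I w z⟫ = Qop I (fun z => ⟪c, w z⟫) z := by
  simp only [Qop_apply, piAvg_apply, inner_sum, real_inner_smul_right, smul_eq_mul,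
    Finset.mul_sum]

lemma inner_Qop_left (I : Finset ι) (w : (∀ i, Z i) → V) (z : ∀ i, Z i) (c : V) :
    ⟪Qop I w z, c⟫ = Qop I (fun z => ⟪w z, c⟫) z := by
  simp only [Qop_apply, piAvg_apply, sum_inner, real_inner_smul_left, smul_eq_mul,
    Finset.mul_sum]

end InnerHelpers

lemma sum_split {ι : Type*} [Fintype ι] [DecidableEq ι] (F : Finset ι → ℝ) :
    ∑ I : Finset ι, F I
      = F ∅ + (∑ i : ι, F {i})
        + ∑ I ∈ Finset.univ.filter (fun I : Finset ι => 2 ≤ I.card), F I := by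
  classical
  have hset : Finset.univ.filter (fun I : Finset ι => ¬ 2 ≤ I.card)
      = insert (∅ : Finset ι) (Finset.univ.image (fun i : ι => ({i} : Finset ι))) := by
    ext I
    simp only [Finset.mem_filter, Finset.mem_univ, true_and, Finset.mem_insert,
      Finset.mem_image]
    constructor
    · intro h
      have : I.card = 0 ∨ I.card = 1 := by omega
      rcases this with h0 | h1
      · exact Or.inl (Finset.card_eq_zero.mp h0)
      · obtain ⟨a, ha⟩ := Finset.card_eq_one.mp h1
        exact Or.inr ⟨a, ha.symm⟩
    · intro h
      rcases h with rfl | ⟨a, rfl⟩ <;> simp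
  have hne : (∅ : Finset ι) ∉ Finset.univ.image (fun i : ι => ({i} : Finset ι)) := by
    simp only [Finset.mem_image, not_exists]
    intro a
    intro hcon
    exact Finset.singleton_ne_empty a hcon.2
  have h1 : ∑ I ∈ Finset.univ.filter (fun I : Finset ι => ¬ 2 ≤ I.card), F I
      = F ∅ + ∑ i : ι, F {i} := by
    rw [hset, Finset.sum_insert hne, Finset.sum_image
      (fun a _ b _ h => Finset.singleton_injective h)]
  rw [← Finset.sum_filter_add_sum_filter_not Finset.univ
    (fun I : Finset ι => 2 ≤ I.card) F, h1]
  ring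

/-- with `m = n`, the factorization `P(y|x) = h(x) · ∏ᵢ fᵢ(xᵢ, yᵢ)` is
equivalent to `⟨u, ṽ⟩ = ⟨ũ, v − v_∅⟩ = 0` and `⟨u_{i}, v_{j}⟩ = 0` for `i ≠ j`, where
`ũ, ṽ` collect the interaction components of order at least two. -/
theorem paired_factorization_iff_orthogonal {n : ℕ}
    (X : Fin n → Type*) [∀ i, Fintype (X i)] [∀ i, Nonempty (X i)] [∀ i, DecidableEq (X i)]
    (Y : Fin n → Type*) [∀ j, Fintype (Y j)] [∀ j, Nonempty (Y j)] [∀ j, DecidableEq (Y j)]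
    (V : Type*) [NormedAddCommGroup V] [InnerProductSpace ℝ V] [FiniteDimensional ℝ V]
    (u : (∀ i, X i) → V) (v : (∀ j, Y j) → V)
    (P : (∀ i, X i) → (∀ j, Y j) → ℝ)
    (hP : ∀ x y, P x y =
      Real.exp ⟪u x, v y⟫ / ∑ y' : ∀ j, Y j, Real.exp ⟪u x, v y'⟫) :
    (∃ (h : (∀ i, X i) → ℝ) (f : ∀ i : Fin n, X i → Y i → ℝ),
      ∀ (x : ∀ i, X i) (y : ∀ j, Y j), P x y = h x * ∏ i : Fin n, f i (x i) (y i)) ↔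
    ((∀ (x : ∀ i, X i) (y : ∀ j, Y j),
        ⟪u x, (∑ J ∈ Finset.univ.filter (fun J : Finset (Fin n) => 2 ≤ J.card),
          Qop J v) y⟫ = 0) ∧
      (∀ (x : ∀ i, X i) (y : ∀ j, Y j),
        ⟪(∑ I ∈ Finset.univ.filter (fun I : Finset (Fin n) => 2 ≤ I.card),
          Qop I u) x, v y - Qop (∅ : Finset (Fin n)) v y⟫ = 0) ∧
      (∀ i j : Fin n, i ≠ j → ∀ (x : ∀ i, X i) (y : ∀ j, Y j),
        ⟪Qop ({i} : Finset (Fin n)) u x, Qop ({j} : Finset (Fin n)) v y⟫ = 0)) := by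
  have hZpos : ∀ x, 0 < ∑ y' : ∀ j, Y j, Real.exp ⟪u x, v y'⟫ := fun x =>
    Finset.sum_pos (fun y' _ => Real.exp_pos _) Finset.univ_nonempty
  constructor
  · rintro ⟨h, f, hfact⟩
    set a : (∀ i, X i) → ℝ := fun x =>
      Real.log (h x) + Real.log (∑ y' : ∀ j, Y j, Real.exp ⟪u x, v y'⟫) with ha
    set g : ∀ i : Fin n, X i → Y i → ℝ := fun i p q => Real.log (f i p q) with hg
    have key : ∀ x y, ⟪u x, v y⟫ = a x + ∑ i, g i (x i) (y i) := by
      intro x y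
      have hPpos : 0 < P x y := by
        rw [hP]; exact div_pos (Real.exp_pos _) (hZpos x)
      have hne : h x * ∏ i, f i (x i) (y i) ≠ 0 := by rw [← hfact]; exact ne_of_gt hPpos
      have hh : h x ≠ 0 := left_ne_zero_of_mul hne
      have hprod : (∏ i, f i (x i) (y i)) ≠ 0 := right_ne_zero_of_mul hne
      have hf : ∀ i ∈ (Finset.univ : Finset (Fin n)), f i (x i) (y i) ≠ 0 := fun i _ =>
        Finset.prod_ne_zero_iff.mp hprod i (Finset.mem_univ i)
      have l1 : Real.log (P x y) = Real.log (h x) + ∑ i, Real.log (f i (x i) (y i)) := by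
        rw [hfact, Real.log_mul hh hprod, Real.log_prod hf]
      have l2 : Real.log (P x y)
          = ⟪u x, v y⟫ - Real.log (∑ y' : ∀ j, Y j, Real.exp ⟪u x, v y'⟫) := by
        rw [hP, Real.log_div (Real.exp_ne_zero _) (ne_of_gt (hZpos x)), Real.log_exp]
      have e0 : a x = Real.log (h x)
          + Real.log (∑ y' : ∀ j, Y j, Real.exp ⟪u x, v y'⟫) := rfl
      have e1 : ∑ i, g i (x i) (y i) = ∑ i, Real.log (f i (x i) (y i)) := rfl
      rw [e0, e1]
      linarith
    refine ⟨?_, ?_, ?_⟩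
    · -- condition (a)
      intro x y
      rw [Finset.sum_apply, inner_sum]
      refine Finset.sum_eq_zero fun J hJ => ?_
      have hJ2 : 2 ≤ J.card := (Finset.mem_filter.mp hJ).2
      have hJne : J.Nonempty := Finset.card_pos.mp (by omega)
      rw [inner_Qop_right]
      calc Qop J (fun y' => ⟪u x, v y'⟫) y
          = Qop J (fun y' => a x + ∑ i, g i (x i) (y' i)) y := by
            congr 1; exact funext fun y' => key x y'
        _ = Qop J (fun _ => a x) y + Qop J (fun y' => ∑ i, g i (x i) (y' i)) y := by
            exact Qop_add _ _ _ _
        _ = 0 + ∑ i, Qop J (fun y' => g i (x i) (y' i)) y := by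
            rw [Qop_const _ _ _ hJne]
            exact congrArg (0 + ·) (Qop_sum _ _ _ _)
        _ = 0 := by
            rw [zero_add]
            refine Finset.sum_eq_zero fun i _ => ?_
            exact Qop_eval (g i (x i)) hJne
              (fun hc => by rw [hc, Finset.card_singleton] at hJ2; omega) y
    · -- condition (b)
      intro x y
      rw [Finset.sum_apply, sum_inner]
      refine Finset.sum_eq_zero fun I hI => ?_
      have hI2 : 2 ≤ I.card := (Finset.mem_filter.mp hI).2
      have hIne : I.Nonempty := Finset.card_pos.mp (by omega)
      have e1 : ∀ y' : ∀ j, Y j, ⟪Qop I u x, v y'⟫ = Qop I a x := by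
        intro y'
        rw [inner_Qop_left]
        calc Qop I (fun x' => ⟪u x', v y'⟫) x
            = Qop I (fun x' => a x' + ∑ i, g i (x' i) (y' i)) x := by
              congr 1; exact funext fun x' => key x' y'
          _ = Qop I a x + Qop I (fun x' => ∑ i, g i (x' i) (y' i)) x := by
              exact Qop_add _ _ _ _
          _ = Qop I a x + ∑ i, Qop I (fun x' => g i (x' i) (y' i)) x := by
              exact congrArg (Qop I a x + ·) (Qop_sum _ _ _ _)
          _ = Qop I a x := by
            rw [Finset.sum_eq_zero (fun i _ => ?_), add_zero]
            exact Qop_eval (fun p => g i p (y' i)) hIne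
              (fun hc => by rw [hc, Finset.card_singleton] at hI2; omega) x
      have e2 : ⟪Qop I u x, Qop (∅ : Finset (Fin n)) v y⟫ = Qop I a x := by
        rw [Qop_empty, real_inner_smul_right, inner_sum,
          Finset.sum_congr rfl (fun y' _ => e1 y'), Finset.sum_const, nsmul_eq_mul]
        have hcard : ((Finset.univ : Finset (∀ j, Y j)).card : ℝ)
            = ∏ j, (Fintype.card (Y j) : ℝ) := by
          rw [Finset.card_univ, Fintype.card_pi]
          push_cast
          rfl
        rw [hcard, ← mul_assoc, inv_mul_cancel₀ (by
          exact Finset.prod_ne_zero_iff.mpr fun j _ =>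
            Nat.cast_ne_zero.mpr (Fintype.card_pos).ne'), one_mul]
      rw [inner_sub_right, e1 y, e2, sub_self]
    · -- condition (c)
      intro i j hij x y
      rw [inner_Qop_left]
      have step : ∀ x' : ∀ i, X i, ⟪u x', Qop ({j} : Finset (Fin n)) v y⟫
          = (fun p => Qop ({j} : Finset (Fin n)) (fun y' => g j p (y' j)) y) (x' j) := by
        intro x'
        rw [inner_Qop_right]
        calc Qop ({j} : Finset (Fin n)) (fun y' => ⟪u x', v y'⟫) y
            = Qop ({j} : Finset (Fin n)) (fun y' => a x' + ∑ i', g i' (x' i') (y' i')) y := by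
              congr 1; exact funext fun y' => key x' y'
          _ = Qop ({j} : Finset (Fin n)) (fun _ => a x') y
              + Qop ({j} : Finset (Fin n)) (fun y' => ∑ i', g i' (x' i') (y' i')) y := by
              exact Qop_add _ _ _ _
          _ = 0 + ∑ i', Qop ({j} : Finset (Fin n)) (fun y' => g i' (x' i') (y' i')) y := by
              rw [Qop_const _ _ _ (Finset.singleton_nonempty j)]
              exact congrArg (0 + ·) (Qop_sum _ _ _ _)
          _ = (fun p => Qop ({j} : Finset (Fin n)) (fun y' => g j p (y' j)) y) (x' j) := by
              rw [zero_add]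
              refine Finset.sum_eq_single j (fun i' _ hne => ?_)
                (fun habs => absurd (Finset.mem_univ j) habs)
              exact Qop_eval (g i' (x' i')) (Finset.singleton_nonempty j)
                (fun hc => hne (Finset.singleton_injective hc).symm) y
      have hfun : (fun x' : ∀ i, X i => ⟪u x', Qop ({j} : Finset (Fin n)) v y⟫)
          = fun x' : ∀ i, X i =>
              (fun p => Qop ({j} : Finset (Fin n)) (fun y' => g j p (y' j)) y) (x' j) :=
        funext step
      rw [hfun]
      exact Qop_eval (i := j)
        (fun p => Qop ({j} : Finset (Fin n)) (fun y' => g j p (y' j)) y)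
        (Finset.singleton_nonempty i) (fun hc => hij (Finset.singleton_injective hc)) x
  · rintro ⟨hA, hB, hC⟩
    have x₀ : ∀ i, X i := Classical.arbitrary _
    have y₀ : ∀ j, Y j := Classical.arbitrary _
    have hQ0 : ∀ y : ∀ j, Y j, Qop (∅ : Finset (Fin n)) v y = Qop (∅ : Finset (Fin n)) v y₀ :=
      fun y => Qop_congr_agree v (fun i hi => absurd hi (Finset.notMem_empty i))
    have hQ0u : ∀ x : ∀ i, X i, Qop (∅ : Finset (Fin n)) u x = Qop (∅ : Finset (Fin n)) u x₀ :=
      fun x => Qop_congr_agree u (fun i hi => absurd hi (Finset.notMem_empty i))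
    have hBconst : ∀ (x : ∀ i, X i) (y : ∀ j, Y j),
        ⟪(∑ I ∈ Finset.univ.filter (fun I : Finset (Fin n) => 2 ≤ I.card), Qop I u) x, v y⟫
        = ⟪(∑ I ∈ Finset.univ.filter (fun I : Finset (Fin n) => 2 ≤ I.card), Qop I u) x,
            Qop (∅ : Finset (Fin n)) v y₀⟫ := by
      intro x y
      have := hB x y
      rw [inner_sub_right, sub_eq_zero] at this
      rw [this, hQ0 y]
    have tail : ∀ (x : ∀ i, X i) (y : ∀ j, Y j) (j : Fin n),
        ∑ I ∈ Finset.univ.filter (fun I : Finset (Fin n) => 2 ≤ I.card),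
          ⟪Qop I u x, Qop ({j} : Finset (Fin n)) v y⟫ = 0 := by
      intro x y j
      have h1 : ∑ I ∈ Finset.univ.filter (fun I : Finset (Fin n) => 2 ≤ I.card),
          ⟪Qop I u x, Qop ({j} : Finset (Fin n)) v y⟫
          = ⟪(∑ I ∈ Finset.univ.filter (fun I : Finset (Fin n) => 2 ≤ I.card), Qop I u) x,
              Qop ({j} : Finset (Fin n)) v y⟫ := by
        rw [Finset.sum_apply, sum_inner]
      rw [h1, inner_Qop_right]
      calc Qop ({j} : Finset (Fin n)) (fun y' =>
            ⟪(∑ I ∈ Finset.univ.filter (fun I : Finset (Fin n) => 2 ≤ I.card), Qop I u) x, v y'⟫) y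
          = Qop ({j} : Finset (Fin n)) (fun _ =>
            ⟪(∑ I ∈ Finset.univ.filter (fun I : Finset (Fin n) => 2 ≤ I.card), Qop I u) x,
              Qop (∅ : Finset (Fin n)) v y₀⟫) y := by
            congr 1; exact funext fun y' => hBconst x y'
        _ = 0 := Qop_const _ _ _ (Finset.singleton_nonempty j)
    have key : ∀ (x : ∀ i, X i) (y : ∀ j, Y j), ⟪u x, v y⟫
        = ⟪u x, Qop (∅ : Finset (Fin n)) v y₀⟫
          + ∑ j : Fin n,
            (⟪Qop (∅ : Finset (Fin n)) u x₀,
                Qop ({j} : Finset (Fin n)) v (Function.update y₀ j (y j))⟫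
              + ⟪Qop ({j} : Finset (Fin n)) u (Function.update x₀ j (x j)),
                  Qop ({j} : Finset (Fin n)) v (Function.update y₀ j (y j))⟫) := by
      intro x y
      have hmid : ∀ j : Fin n, ⟪u x, Qop ({j} : Finset (Fin n)) v y⟫
          = ⟪Qop (∅ : Finset (Fin n)) u x₀,
              Qop ({j} : Finset (Fin n)) v (Function.update y₀ j (y j))⟫
            + ⟪Qop ({j} : Finset (Fin n)) u (Function.update x₀ j (x j)),
                Qop ({j} : Finset (Fin n)) v (Function.update y₀ j (y j))⟫ := by
        intro j
        have hvy : Qop ({j} : Finset (Fin n)) v y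
            = Qop ({j} : Finset (Fin n)) v (Function.update y₀ j (y j)) := by
          refine Qop_congr_agree v fun k hk => ?_
          rw [Finset.mem_singleton] at hk
          subst hk
          rw [Function.update_self]
        have hux : Qop ({j} : Finset (Fin n)) u x
            = Qop ({j} : Finset (Fin n)) u (Function.update x₀ j (x j)) := by
          refine Qop_congr_agree u fun k hk => ?_
          rw [Finset.mem_singleton] at hk
          subst hk
          rw [Function.update_self]
        calc ⟪u x, Qop ({j} : Finset (Fin n)) v y⟫
            = ∑ I : Finset (Fin n), ⟪Qop I u x, Qop ({j} : Finset (Fin n)) v y⟫ := by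
              conv_lhs => rw [← Qop_total u x]
              rw [sum_inner]
          _ = ⟪Qop (∅ : Finset (Fin n)) u x, Qop ({j} : Finset (Fin n)) v y⟫
              + (∑ i : Fin n, ⟪Qop ({i} : Finset (Fin n)) u x, Qop ({j} : Finset (Fin n)) v y⟫)
              + ∑ I ∈ Finset.univ.filter (fun I : Finset (Fin n) => 2 ≤ I.card),
                  ⟪Qop I u x, Qop ({j} : Finset (Fin n)) v y⟫ :=
              sum_split _
          _ = ⟪Qop (∅ : Finset (Fin n)) u x, Qop ({j} : Finset (Fin n)) v y⟫
              + ⟪Qop ({j} : Finset (Fin n)) u x, Qop ({j} : Finset (Fin n)) v y⟫ := by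
              rw [tail x y j, add_zero]
              congr 1
              exact Finset.sum_eq_single j (fun i _ hij => hC i j hij x y)
                (fun habs => absurd (Finset.mem_univ j) habs)
          _ = _ := by rw [hQ0u x, hvy, hux]
      calc ⟪u x, v y⟫
          = ⟪u x, ∑ J : Finset (Fin n), Qop J v y⟫ := by rw [Qop_total]
        _ = ∑ J : Finset (Fin n), ⟪u x, Qop J v y⟫ := inner_sum _ _ _
        _ = ⟪u x, Qop (∅ : Finset (Fin n)) v y⟫
            + (∑ j : Fin n, ⟪u x, Qop ({j} : Finset (Fin n)) v y⟫)
            + ∑ J ∈ Finset.univ.filter (fun J : Finset (Fin n) => 2 ≤ J.card),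
                ⟪u x, Qop J v y⟫ := sum_split _
        _ = _ := by
            have h3 : ∑ J ∈ Finset.univ.filter (fun J : Finset (Fin n) => 2 ≤ J.card),
                ⟪u x, Qop J v y⟫ = 0 := by
              rw [← inner_sum]
              have := hA x y
              rwa [Finset.sum_apply] at this
            rw [h3, add_zero, hQ0 y]
            congr 1
            exact Finset.sum_congr rfl fun j _ => hmid j
    refine ⟨fun x => Real.exp ⟪u x, Qop (∅ : Finset (Fin n)) v y₀⟫
        / ∑ y' : ∀ j, Y j, Real.exp ⟪u x, v y'⟫,
      fun j p q => Real.exp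
        (⟪Qop (∅ : Finset (Fin n)) u x₀, Qop ({j} : Finset (Fin n)) v (Function.update y₀ j q)⟫
          + ⟪Qop ({j} : Finset (Fin n)) u (Function.update x₀ j p),
              Qop ({j} : Finset (Fin n)) v (Function.update y₀ j q)⟫), ?_⟩
    intro x y
    rw [hP, key x y, Real.exp_add, Real.exp_sum]
    ring
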